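/- Let σ > 0, β ≥ 0, let g : [0,∞) → [0,∞) be a nondecreasing continuous function with g(0) = 0, and take b = 0, c = 0, ν = 0 and μ(dz) = σ z^{−2} dz in the generator L. Then for V_log(x) = log(1+x) and every x ≥ 0 the integrals converge and LV_log(x) = σx[1 + log(1+x)]/(1+x) − g(x)/(1+x) + β/(1+x). -/

import Mathlib

open MeasureTheory

/-- The Lévy measure `μ(dz) = σ z⁻² dz` on `(0,∞)` (Neveu branching case). -/
noncomputable def muNeveu (σ : ℝ) : Measure ℝ :=
  (volume.restrict (Set.Ioi (0 : ℝ))).withDensity (fun z => ENNReal.ofReal (σ / z ^ 2))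

open Set Filter
open scoped NNReal ENNReal

lemma log_one_add_le {u : ℝ} (hu : 0 ≤ u) : Real.log (1 + u) ≤ u := by
  have := Real.log_le_sub_one_of_pos (by linarith : (0:ℝ) < 1 + u)
  linarith

lemma le_log_one_add {u : ℝ} (hu : 0 ≤ u) : u - u ^ 2 / 2 ≤ Real.log (1 + u) := by
  set φ : ℝ → ℝ := fun s => Real.log (1 + s) - s + s ^ 2 / 2 with hφ
  have key : ∀ t : ℝ, 0 ≤ t → HasDerivAt φ ((1 + t)⁻¹ - 1 + t) t := by
    intro t ht
    have h1 : (0:ℝ) < 1 + t := by linarith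
    have l1 : HasDerivAt (fun s : ℝ => 1 + s) 1 t := (hasDerivAt_id t).const_add 1
    have l2 : HasDerivAt (fun s : ℝ => Real.log (1 + s)) (1 / (1 + t)) t :=
      l1.log h1.ne'
    have l3 : HasDerivAt (fun s : ℝ => s ^ 2 / 2) (t) t := by
      simpa using (hasDerivAt_pow 2 t).div_const 2
    have := (l2.sub (hasDerivAt_id t)).add l3
    rw [one_div] at this
    exact this
  have hmono : MonotoneOn φ (Set.Ici 0) := by
    apply monotoneOn_of_deriv_nonneg (convex_Ici 0)
    · exact fun t ht => (key t ht).continuousAt.continuousWithinAt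
    · intro t ht
      rw [interior_Ici] at ht
      exact (key t (le_of_lt ht)).differentiableAt.differentiableWithinAt
    · intro t ht
      rw [interior_Ici] at ht
      rw [(key t (le_of_lt ht)).deriv]
      have h1 : (0:ℝ) < 1 + t := by linarith [ht.out]
      have : (1 + t)⁻¹ - 1 + t = t ^ 2 / (1 + t) := by field_simp; ring
      rw [this]; positivity
  have h0 : φ 0 = 0 := by simp [hφ]
  have := hmono (self_mem_Ici) hu hu
  rw [h0] at this
  simp only [hφ] at this
  linarith

lemma hasDerivAt_log_one_add_div {a : ℝ} (ha : 0 < a) {z : ℝ} (hz : 0 ≤ z) :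
    HasDerivAt (fun w : ℝ => Real.log (1 + w / a)) ((a + z)⁻¹) z := by
  have h1 : (0:ℝ) < 1 + z / a := by positivity
  have l1 : HasDerivAt (fun w : ℝ => 1 + w / a) (1 / a) z := by
    simpa using ((hasDerivAt_id z).div_const a).const_add 1
  have := l1.log h1.ne'
  convert this using 1
  rw [eq_div_iff h1.ne', inv_mul_eq_div, div_eq_div_iff (by positivity) ha.ne']
  field_simp

lemma key0 {a : ℝ} (ha : 1 ≤ a) :
    IntegrableOn
      (fun z => (Real.log (1 + z / a) - (z / a) * (if z ≤ 1 then 1 else 0)) / z ^ 2)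
      (Ioi 0) volume ∧
    ∫ z in Ioi (0:ℝ), (Real.log (1 + z / a) - (z / a) * (if z ≤ 1 then 1 else 0)) / z ^ 2
      = (1 + Real.log a) / a := by
  have ha0 : (0:ℝ) < a := lt_of_lt_of_le one_pos ha
  set h₀ : ℝ → ℝ :=
    fun z => (Real.log (1 + z / a) - (z / a) * (if z ≤ 1 then 1 else 0)) / z ^ 2 with hh₀
  set hneg : ℝ → ℝ := fun z => (Real.log (1 + z / a) - z / a) / z ^ 2 with hhneg
  set hpos : ℝ → ℝ := fun z => Real.log (1 + z / a) / z ^ 2 with hhpos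
  have e1 : EqOn h₀ hneg (Ioc 0 1) := fun z hz => by simp [hh₀, hhneg, hz.2]
  have e2 : EqOn h₀ hpos (Ioi 1) := by
    intro z hz
    simp [hh₀, hhpos, not_le.2 (show (1:ℝ) < z from hz)]
  -- measurability
  have mneg : Measurable hneg :=
    ((Real.measurable_log.comp ((measurable_id.div_const a).const_add 1)).sub
      (measurable_id.div_const a)).div (measurable_id.pow_const 2)
  -- bound on (0,1]
  have bdd : ∀ z ∈ Ioc (0:ℝ) 1, ‖hneg z‖ ≤ 1 / 2 := by
    intro z hz
    have hz0 : (0:ℝ) < z := hz.1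
    have hu : (0:ℝ) ≤ z / a := by positivity
    have hul : z / a ≤ z := div_le_self hz0.le ha
    have l1 := log_one_add_le hu
    have l2 := le_log_one_add hu
    have habs : |Real.log (1 + z / a) - z / a| ≤ z ^ 2 / 2 := by
      rw [abs_le]
      constructor
      · nlinarith
      · nlinarith
    have : ‖hneg z‖ = |Real.log (1 + z / a) - z / a| / z ^ 2 := by
      rw [hhneg]
      rw [Real.norm_eq_abs, abs_div, abs_of_nonneg (sq_nonneg z)]
    rw [this]
    rw [div_le_iff₀ (by positivity : (0:ℝ) < z ^ 2)]
    nlinarith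
  have intneg : IntegrableOn hneg (Ioc 0 1) volume :=
    Measure.integrableOn_of_bounded measure_Ioc_lt_top.ne mneg.aestronglyMeasurable
      ((ae_restrict_iff' measurableSet_Ioc).2 (ae_of_all _ bdd))
  -- antiderivative on (0,1]
  set G : ℝ → ℝ := fun z =>
    if z = 0 then -(1 / a) - Real.log a / a
    else -(Real.log (1 + z / a)) / z - Real.log (z + a) / a with hG
  have hGd : ∀ z : ℝ, 0 < z → HasDerivAt G (hneg z) z := by
    intro z hz
    have hza : (0:ℝ) < z + a := by linarith
    have h1 : (0:ℝ) < 1 + z / a := by positivity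
    have d1 : HasDerivAt (fun w : ℝ => -(Real.log (1 + w / a)) / w)
        ((-(a + z)⁻¹ * z - -(Real.log (1 + z / a)) * 1) / z ^ 2) z :=
      (hasDerivAt_log_one_add_div ha0 hz.le).neg.div (hasDerivAt_id z) hz.ne'
    have d2 : HasDerivAt (fun w : ℝ => Real.log (w + a) / a) (1 / (z + a) / a) z :=
      (((hasDerivAt_id z).add_const a).log hza.ne').div_const a
    have hev : G =ᶠ[nhds z] fun w => -(Real.log (1 + w / a)) / w - Real.log (w + a) / a := by
      filter_upwards [eventually_ne_nhds hz.ne'] with w hw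
      simp [hG, hw]
    have := ((d1.sub d2).congr_of_eventuallyEq hev)
    refine this.congr_deriv ?_
    rw [hhneg]
    field_simp
    ring
  have hGc : ContinuousOn G (Icc 0 1) := by
    intro z hz
    rcases eq_or_lt_of_le hz.1 with h0 | h0
    · -- z = 0
      rw [← h0]
      rw [← continuousWithinAt_diff_self]
      have hsub : Icc (0:ℝ) 1 \ {0} ⊆ {(0:ℝ)}ᶜ := fun w hw => hw.2
      have hT1 : Tendsto (fun w => Real.log (1 + w / a) / w) (nhdsWithin 0 {(0:ℝ)}ᶜ)
          (nhds (1 / a)) := by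
        have hs := hasDerivAt_iff_tendsto_slope.1 (hasDerivAt_log_one_add_div ha0 le_rfl)
        have : (a + 0)⁻¹ = 1 / a := by simp
        rw [this] at hs
        refine hs.congr fun w => ?_
        simp [slope_def_field]
      have hT1' : Tendsto (fun w => -(Real.log (1 + w / a)) / w)
          (nhdsWithin 0 (Icc (0:ℝ) 1 \ {0})) (nhds (-(1 / a))) := by
        refine (Tendsto.congr (fun w => (neg_div _ _).symm) hT1.neg).mono_left
          (nhdsWithin_mono 0 hsub)
      have hT2 : Tendsto (fun w => Real.log (w + a) / a)
          (nhdsWithin 0 (Icc (0:ℝ) 1 \ {0})) (nhds (Real.log a / a)) := by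
        have hc : ContinuousAt (fun w : ℝ => Real.log (w + a) / a) 0 := by
          have h1 : ContinuousAt (fun w : ℝ => w + a) 0 := by fun_prop
          have h2 : ((fun w : ℝ => w + a) 0) ≠ 0 := by simpa using ha0.ne'
          exact (ContinuousAt.comp (x := (0:ℝ)) (g := Real.log)
            (f := fun w : ℝ => w + a) (Real.continuousAt_log h2) h1).div_const a
        have := hc.tendsto.mono_left (nhdsWithin_le_nhds (s := Icc (0:ℝ) 1 \ {0}))
        simpa using this
      have : Tendsto G (nhdsWithin 0 (Icc (0:ℝ) 1 \ {0})) (nhds (-(1/a) - Real.log a / a)) := by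
        refine ((hT1'.sub hT2)).congr' ?_
        filter_upwards [self_mem_nhdsWithin] with w hw
        have hw0 : w ≠ 0 := fun h => hw.2 (by simp [h])
        simp [hG, hw0]
      have hG0 : G 0 = -(1/a) - Real.log a / a := by simp [hG]
      rw [ContinuousWithinAt, hG0]
      exact this
    · exact (hGd z h0).continuousAt.continuousWithinAt
  have value1 : ∫ z in Ioc (0:ℝ) 1, hneg z = G 1 - G 0 := by
    rw [← intervalIntegral.integral_of_le zero_le_one]
    exact intervalIntegral.integral_eq_sub_of_hasDerivAt_of_le zero_le_one hGc
      (fun z hz => hGd z hz.1)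
      ((intervalIntegrable_iff_integrableOn_Ioc_of_le zero_le_one).2 intneg)
  -- antiderivative on (1,∞)
  set F : ℝ → ℝ := fun w =>
    -(Real.log (1 + w / a)) / w + (Real.log w - Real.log (w + a)) / a with hF
  have hFd : ∀ z : ℝ, 0 < z → HasDerivAt F (hpos z) z := by
    intro z hz
    have hza : (0:ℝ) < z + a := by linarith
    have d1 : HasDerivAt (fun w : ℝ => -(Real.log (1 + w / a)) / w)
        ((-(a + z)⁻¹ * z - -(Real.log (1 + z / a)) * 1) / z ^ 2) z :=
      (hasDerivAt_log_one_add_div ha0 hz.le).neg.div (hasDerivAt_id z) hz.ne'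
    have d3 : HasDerivAt (fun w : ℝ => (Real.log w - Real.log (w + a)) / a)
        ((1 / z - 1 / (z + a)) / a) z := by
      have l1 : HasDerivAt (fun w : ℝ => Real.log w) (1 / z) z := by
        simpa using (hasDerivAt_id z).log hz.ne'
      have l2 : HasDerivAt (fun w : ℝ => Real.log (w + a)) (1 / (z + a)) z :=
        ((hasDerivAt_id z).add_const a).log hza.ne'
      exact (l1.sub l2).div_const a
    have := d1.add d3
    refine this.congr_deriv ?_
    rw [hhpos]
    field_simp
    ring
  have hFpos : ∀ z ∈ Ioi (1:ℝ), 0 ≤ hpos z := by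
    intro z hz
    have hz0 : (0:ℝ) < z := lt_trans one_pos hz
    have : (0:ℝ) ≤ z / a := by positivity
    exact div_nonneg (Real.log_nonneg (by linarith)) (sq_nonneg z)
  have hFc : ContinuousWithinAt F (Ici 1) 1 := (hFd 1 one_pos).continuousAt.continuousWithinAt
  have hFtend : Tendsto F atTop (nhds 0) := by
    have T1 : Tendsto (fun z => Real.log (1 + z / a) / z) atTop (nhds 0) := by
      have base := Real.tendsto_pow_log_div_mul_add_atTop 1 (-a) 1 one_ne_zero
      have comp := base.comp (tendsto_atTop_add_const_right atTop a tendsto_id)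
      have c1 : Tendsto (fun z : ℝ => Real.log (z + a) / z) atTop (nhds 0) := by
        refine comp.congr fun z => ?_
        simp [Function.comp]
      have c2 : Tendsto (fun z : ℝ => Real.log a / z) atTop (nhds 0) :=
        tendsto_const_nhds.div_atTop tendsto_id
      have := c1.sub c2
      rw [sub_zero] at this
      refine this.congr' ?_
      filter_upwards [eventually_gt_atTop (0:ℝ)] with z hz
      have h1 : (1:ℝ) + z / a = (z + a) / a := by field_simp; ring
      rw [h1, Real.log_div (by linarith) ha0.ne']
      ring
    have T2 : Tendsto (fun z : ℝ => (Real.log z - Real.log (z + a)) / a) atTop (nhds 0) := by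
      have c0 : Tendsto (fun z : ℝ => a / z) atTop (nhds 0) :=
        tendsto_const_nhds.div_atTop tendsto_id
      have c1 : Tendsto (fun z : ℝ => (1:ℝ) + a / z) atTop (nhds 1) := by
        simpa using c0.const_add 1
      have c2 : Tendsto (fun z : ℝ => Real.log (1 + a / z)) atTop (nhds 0) := by
        have h2 : ((1:ℝ)) ≠ 0 := one_ne_zero
        have := (Real.continuousAt_log h2).tendsto.comp c1
        rw [Real.log_one] at this
        exact this
      have := (c2.neg).div_const a
      rw [neg_zero, zero_div] at this
      refine this.congr' ?_
      filter_upwards [eventually_gt_atTop (0:ℝ)] with z hz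
      have h1 : (1:ℝ) + a / z = (z + a) / z := by field_simp
      rw [h1, Real.log_div (by linarith) hz.ne']
      ring
    have := (Tendsto.congr (fun z => (neg_div _ _).symm) T1.neg).add T2
    rw [neg_zero, zero_add] at this
    exact this
  have intpos : IntegrableOn hpos (Ioi 1) volume :=
    integrableOn_Ioi_deriv_of_nonneg hFc (fun z hz => hFd z (lt_trans one_pos hz)) hFpos hFtend
  have value2 : ∫ z in Ioi (1:ℝ), hpos z = 0 - F 1 :=
    integral_Ioi_of_hasDerivAt_of_nonneg hFc (fun z hz => hFd z (lt_trans one_pos hz)) hFpos hFtend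
  -- combine
  have hI1 : IntegrableOn h₀ (Ioc 0 1) volume :=
    intneg.congr_fun (fun z hz => (e1 hz).symm) measurableSet_Ioc
  have hI2 : IntegrableOn h₀ (Ioi 1) volume :=
    intpos.congr_fun (fun z hz => (e2 hz).symm) measurableSet_Ioi
  have hint : IntegrableOn h₀ (Ioi 0) volume := by
    rw [← Ioc_union_Ioi_eq_Ioi (zero_le_one (α := ℝ))]
    exact hI1.union hI2
  refine ⟨hint, ?_⟩
  have hsplit : ∫ z in Ioi (0:ℝ), h₀ z
      = (∫ z in Ioc (0:ℝ) 1, h₀ z) + ∫ z in Ioi (1:ℝ), h₀ z := by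
    rw [← Ioc_union_Ioi_eq_Ioi (zero_le_one (α := ℝ)),
      setIntegral_union Ioc_disjoint_Ioi_same measurableSet_Ioi hI1 hI2]
  have hc1 : ∫ z in Ioc (0:ℝ) 1, h₀ z = ∫ z in Ioc (0:ℝ) 1, hneg z :=
    setIntegral_congr_fun measurableSet_Ioc e1
  have hc2 : ∫ z in Ioi (1:ℝ), h₀ z = ∫ z in Ioi (1:ℝ), hpos z :=
    setIntegral_congr_fun measurableSet_Ioi e2
  rw [show (∫ z in Ioi (0:ℝ), (Real.log (1 + z / a) - (z / a) * (if z ≤ 1 then 1 else 0)) / z ^ 2)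
      = ∫ z in Ioi (0:ℝ), h₀ z from rfl]
  rw [hsplit, hc1, hc2, value1, value2]
  have hG1 : G 1 = -(Real.log (1 + 1 / a)) / 1 - Real.log (1 + a) / a := by
    simp [hG]
  have hG0 : G 0 = -(1 / a) - Real.log a / a := by simp [hG]
  have hF1 : F 1 = -(Real.log (1 + 1 / a)) / 1 + (Real.log 1 - Real.log (1 + a)) / a := by
    simp [hF]
  rw [hG1, hG0, hF1, Real.log_one]
  field_simp
  ring


lemma muNeveu_restrict (σ : ℝ) : (muNeveu σ).restrict (Set.Ioi 0) = muNeveu σ := by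
  rw [muNeveu, restrict_withDensity measurableSet_Ioi,
    Measure.restrict_restrict measurableSet_Ioi, Set.inter_self]

/- Example 1.3 of Li–Li–Wang–Zhou (case `α = 1`): with `b = 0`, `c = 0`,
`ν = 0` and `μ(dz) = σ z⁻² dz` in the generator `L`, for `V_log(x) = log(1+x)`
and every `x ≥ 0` the integrals converge and
`LV_log(x) = σx[1 + log(1+x)]/(1+x) − g(x)/(1+x) + β/(1+x)`. -/
theorem generator_Vlog_neveu
    (σ β : ℝ) (hσ : 0 < σ) (hβ : 0 ≤ β)
    (g : ℝ → ℝ) (hg0 : g 0 = 0) (hgmono : MonotoneOn g (Set.Ici 0))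
    (hgcont : ContinuousOn g (Set.Ici 0)) (hgnonneg : ∀ x ∈ Set.Ici (0 : ℝ), 0 ≤ g x) :
    ∀ x : ℝ, 0 ≤ x →
      MeasureTheory.IntegrableOn
        (fun z => Real.log (1 + z / (1 + x)) - (z / (1 + x)) * (if z ≤ 1 then 1 else 0))
        (Set.Ioi 0) (muNeveu σ) ∧
      x * (∫ z in Set.Ioi (0 : ℝ),
          (Real.log (1 + z / (1 + x)) - (z / (1 + x)) * (if z ≤ 1 then 1 else 0)) ∂(muNeveu σ))
        + (β - g x) / (1 + x)
        = σ * x * (1 + Real.log (1 + x)) / (1 + x) - g x / (1 + x) + β / (1 + x) := by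
  intro x hx
  have h1x : (0:ℝ) < 1 + x := by linarith
  have key := key0 (a := 1 + x) (by linarith)
  set f : ℝ → ℝ :=
    fun z => Real.log (1 + z / (1 + x)) - (z / (1 + x)) * (if z ≤ 1 then 1 else 0) with hf
  set d : ℝ → ℝ≥0 := fun z => (σ / z ^ 2).toNNReal with hdd
  have hd : Measurable d := (measurable_const.div (measurable_id.pow_const 2)).real_toNNReal
  have hmu : muNeveu σ = (volume.restrict (Set.Ioi (0:ℝ))).withDensity
      (fun z => ((d z : ℝ≥0) : ℝ≥0∞)) := rfl
  have hsmul_eq : ∀ z ∈ Set.Ioi (0:ℝ), (d z : ℝ) • f z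
      = σ * ((Real.log (1 + z / (1 + x)) - (z / (1 + x)) * (if z ≤ 1 then 1 else 0)) / z ^ 2) := by
    intro z hz
    have hz0 : (0:ℝ) < z := hz
    have hco : ((d z : ℝ)) = σ / z ^ 2 :=
      Real.coe_toNNReal _ (le_of_lt (by positivity))
    rw [smul_eq_mul, hco, hf]
    ring
  have hK1 : IntegrableOn
      (fun z => σ * ((Real.log (1 + z / (1 + x)) - (z / (1 + x)) * (if z ≤ 1 then 1 else 0)) / z ^ 2))
      (Set.Ioi 0) volume := key.1.const_mul σ
  have hK2 : ∫ z in Set.Ioi (0:ℝ),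
      σ * ((Real.log (1 + z / (1 + x)) - (z / (1 + x)) * (if z ≤ 1 then 1 else 0)) / z ^ 2)
      = σ * ((1 + Real.log (1 + x)) / (1 + x)) := by
    rw [MeasureTheory.integral_const_mul, key.2]
  constructor
  · rw [IntegrableOn, muNeveu_restrict, hmu,
      integrable_withDensity_iff_integrable_smul₀ hd.aemeasurable]
    exact hK1.congr ((ae_restrict_iff' measurableSet_Ioi).2
      (ae_of_all _ fun z hz => (hsmul_eq z hz).symm))
  · have hIeq : (∫ z in Set.Ioi (0:ℝ), f z ∂(muNeveu σ))
        = σ * ((1 + Real.log (1 + x)) / (1 + x)) := by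
      rw [muNeveu_restrict, hmu, integral_withDensity_eq_integral_smul hd f]
      rw [← hK2]
      exact integral_congr_ae ((ae_restrict_iff' measurableSet_Ioi).2 (ae_of_all _ hsmul_eq))
    rw [hf] at hIeq
    rw [hIeq]
    field_simp
    ring
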